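/- For the standard cross cap f₀(u,v) = (u, uv, v²) with unit normal ν₀(u,v) = (2v², -2v, u)/√(u² + 4v² + 4v⁴), the map L₀ = (f₀, ν₀) : ℝ² ∖ {(0,0)} → ℝ³ × ℝ³ is injective. -/
import Mathlib


/-- The standard cross cap. -/
def f₀ : ℝ × ℝ → ℝ × ℝ × ℝ := fun p => (p.1, p.1 * p.2, p.2 ^ 2)

/-- A unit normal vector field of the standard cross cap. -/
noncomputable def ν₀ : ℝ × ℝ → ℝ × ℝ × ℝ := fun p =>
  (Real.sqrt (p.1 ^ 2 + 4 * p.2 ^ 2 + 4 * p.2 ^ 4))⁻¹ •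
    (2 * p.2 ^ 2, -2 * p.2, p.1)

/-- The map L₀ = (f₀, ν₀). -/
noncomputable def L₀ : ℝ × ℝ → (ℝ × ℝ × ℝ) × (ℝ × ℝ × ℝ) := fun p => (f₀ p, ν₀ p)

theorem L0_injective :
    Set.InjOn L₀ {p : ℝ × ℝ | p ≠ ((0 : ℝ), (0 : ℝ))} := by
  rintro ⟨u, v⟩ hp ⟨u', v'⟩ hq h
  simp only [L₀, f₀, ν₀, Prod.mk.injEq, Prod.smul_mk, smul_eq_mul] at h
  obtain ⟨⟨h1, h2, h3⟩, h4, h5, h6⟩ := h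
  subst h1
  have h4' : v ^ 4 = v' ^ 4 := by nlinarith [h3]
  rw [← h3, ← h4'] at h5
  have hpos : 0 < u ^ 2 + 4 * v ^ 2 + 4 * v ^ 4 := by
    simp only [Set.mem_setOf_eq, ne_eq, Prod.mk.injEq, not_and] at hp
    rcases eq_or_ne u 0 with hu | hu
    · have hv : v ≠ 0 := hp hu
      positivity
    · positivity
  have hs : (Real.sqrt (u ^ 2 + 4 * v ^ 2 + 4 * v ^ 4))⁻¹ ≠ 0 := by
    positivity
  have : (-2 : ℝ) * v = -2 * v' := mul_left_cancel₀ hs h5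
  have : v = v' := by linarith
  subst this
  rfl
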